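/- Let q ≠ 0 and r be real numbers. For every nonnegative integer n, ĉ_n^q(−r) = ∑_{k=0}^n (−1)^k w(n,k)/(k+1). -/

import Mathlib

/-- The falling factorial `(x)_k = x(x-1)⋯(x-k+1)`. -/
noncomputable def fallFac (x : ℝ) (k : ℕ) : ℝ := ∏ i ∈ Finset.range k, (x - i)

/-- The generalized falling factorial `(x|q)_k = x(x-q)⋯(x-(k-1)q)`. -/
noncomputable def genFallFac (q x : ℝ) (k : ℕ) : ℝ := ∏ i ∈ Finset.range k, (x - i * q)

/-- The Cauchy polynomials with a `q` parameter of the second kind: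
`ĉ_n^q(z) = ∫_0^1 (−x + z | q)_n dx`. -/
noncomputable def cauchySecond (q z : ℝ) (n : ℕ) : ℝ := ∫ x in (0:ℝ)..1, genFallFac q (-x + z) n

/-- `ĉ_n^q(−r) = ∑_{k=0}^n (−1)^k w(n,k)/(k+1)`. -/
theorem cauchySecond_eq_sum_whitneyFirst (q r : ℝ) (hq : q ≠ 0)
    (w : ℕ → ℕ → ℝ)
    (hw0 : ∀ n k, n < k → w n k = 0)
    (hw : ∀ n : ℕ, ∀ x : ℝ, q ^ n * fallFac x n =
      ∑ k ∈ Finset.range (n + 1), w n k * (q * x + r) ^ k)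
    (n : ℕ) :
    cauchySecond q (-r) n =
      ∑ k ∈ Finset.range (n + 1), (-1 : ℝ) ^ k * w n k / ((k : ℝ) + 1) := by
  have key : ∀ z : ℝ, genFallFac q z n =
      ∑ k ∈ Finset.range (n + 1), w n k * (z + r) ^ k := by
    intro z
    have h := hw n (z / q)
    have h1 : q ^ n * fallFac (z / q) n = genFallFac q z n := by
      unfold fallFac genFallFac
      rw [← Finset.card_range n, ← Finset.prod_const q, Finset.card_range,
        ← Finset.prod_mul_distrib]
      exact Finset.prod_congr rfl fun i _ => by field_simp
    have h2 : q * (z / q) = z := mul_div_cancel₀ z hq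
    rw [h1, h2] at h
    exact h
  unfold cauchySecond
  have hint : ∀ x : ℝ, genFallFac q (-x + -r) n =
      ∑ k ∈ Finset.range (n + 1), w n k * (-x) ^ k := by
    intro x
    rw [key (-x + -r)]
    congr 1; ext k; ring_nf
  rw [intervalIntegral.integral_congr (fun x _ => hint x)]
  rw [intervalIntegral.integral_finset_sum]
  · refine Finset.sum_congr rfl fun k _ => ?_
    have : ∀ x : ℝ, w n k * (-x) ^ k = (w n k * (-1) ^ k) * x ^ k := by
      intro x; rw [neg_pow]; ring
    rw [intervalIntegral.integral_congr (fun x _ => this x),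
      intervalIntegral.integral_const_mul, integral_pow]
    simp
    ring
  · intro k _
    apply Continuous.intervalIntegrable
    continuity
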